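/- Let R be a polynomial ring in finitely many variables over ℤ, and let f₁,…,f_n, g₁,…,g_n ∈ R satisfy f₁g₁ + ⋯ + f_ng_n = 0, where g₁,…,g_n form a regular sequence in R. Let p be a prime integer, e ≥ 1, q = p^e, and let λ ∈ R satisfy p·λ = (f₁g₁)^q + ⋯ + (f_ng_n)^q. Then there exists an integer k ≥ 0 such that λ·(g₁⋯g_n)^k ∈ (g₁^{q+k}, …, g_n^{q+k})R. -/

import Mathlib

open Finset

private lemma koszul {R : Type*} [CommRing R] :
    ∀ (n : ℕ) (g f : Fin n → R),
      RingTheory.Sequence.IsWeaklyRegular R (List.ofFn g) →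
      (∑ i, f i * g i = 0) →
      ∃ a : Fin n → Fin n → R, (∀ i j, a j i = - a i j) ∧ (∀ i, a i i = 0) ∧
        (∀ i, f i = ∑ j, a i j * g j) := by
  intro n
  induction n with
  | zero =>
    intro g f _ _
    exact ⟨fun _ _ => 0, fun i => i.elim0, fun i => i.elim0, fun i => i.elim0⟩
  | succ n ih =>
    intro g f hreg hsum
    have hlist : List.ofFn g
        = (List.ofFn fun i : Fin n => g i.castSucc) ++ [g (Fin.last n)] := by
      rw [List.ofFn_succ', List.concat_eq_append]
    rw [hlist, RingTheory.Sequence.isWeaklyRegular_append_iff] at hreg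
    obtain ⟨hw1, hw2⟩ := hreg
    rw [RingTheory.Sequence.isWeaklyRegular_singleton_iff] at hw2
    set I : Ideal R := Ideal.span (Set.range fun i : Fin n => g i.castSucc) with hI
    have hset : {r : R | r ∈ List.ofFn fun i : Fin n => g i.castSucc}
        = Set.range fun i : Fin n => g i.castSucc := by
      ext x
      exact List.mem_ofFn
    have hofList : Ideal.ofList (List.ofFn fun i : Fin n => g i.castSucc) = I := by
      rw [hI]
      exact congrArg Ideal.span hset
    have hmem_smul : ∀ x : R,
        x ∈ (Ideal.ofList (List.ofFn fun i : Fin n => g i.castSucc) • ⊤ : Submodule R R)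
          ↔ x ∈ I := by
      intro x
      rw [hofList, smul_eq_mul, Ideal.mul_top]
    rw [Fin.sum_univ_castSucc] at hsum
    have h1 : f (Fin.last n) * g (Fin.last n) ∈ I := by
      have heq : f (Fin.last n) * g (Fin.last n)
          = -∑ i : Fin n, f i.castSucc * g i.castSucc := by
        linear_combination hsum
      rw [heq]
      exact neg_mem (Ideal.sum_mem _ fun i _ =>
        Ideal.mul_mem_left _ _ (Ideal.subset_span ⟨i, rfl⟩))
    have h2 : f (Fin.last n) ∈ I := by
      have hq0 : (Submodule.Quotient.mk (f (Fin.last n)) :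
          R ⧸ (Ideal.ofList (List.ofFn fun i : Fin n => g i.castSucc) • ⊤ : Submodule R R))
            = 0 := by
        apply hw2
        show g (Fin.last n) • Submodule.Quotient.mk (f (Fin.last n)) = g (Fin.last n) • (0 : _)
        rw [smul_zero, ← Submodule.Quotient.mk_smul, Submodule.Quotient.mk_eq_zero]
        refine (hmem_smul _).mpr ?_
        show g (Fin.last n) * f (Fin.last n) ∈ I
        rw [mul_comm]
        exact h1
      rw [Submodule.Quotient.mk_eq_zero] at hq0
      exact (hmem_smul _).mp hq0
    obtain ⟨c, hc⟩ := Ideal.mem_span_range_iff_exists_fun.mp h2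
    have hsum' : ∑ i : Fin n,
        (f i.castSucc + c i * g (Fin.last n)) * g i.castSucc = 0 := by
      have hexp : ∑ i : Fin n, (f i.castSucc + c i * g (Fin.last n)) * g i.castSucc
          = (∑ i : Fin n, f i.castSucc * g i.castSucc)
            + g (Fin.last n) * ∑ i : Fin n, c i * g i.castSucc := by
        rw [Finset.mul_sum, ← Finset.sum_add_distrib]
        exact Finset.sum_congr rfl fun i _ => by ring
      rw [hexp, hc]
      linear_combination hsum
    obtain ⟨a', ha1, ha2, ha3⟩ := ih (fun i => g i.castSucc)
      (fun i => f i.castSucc + c i * g (Fin.last n)) hw1 hsum'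
    refine ⟨fun i => Fin.lastCases (motive := fun _ => Fin (n + 1) → R)
        (fun j => Fin.lastCases 0 (fun j' => c j') j)
        (fun i' j => Fin.lastCases (-(c i')) (fun j' => a' i' j') j) i, ?_, ?_, ?_⟩
    · intro i j
      cases i using Fin.lastCases with
      | last =>
        cases j using Fin.lastCases with
        | last => simp
        | cast j' => simp
      | cast i' =>
        cases j using Fin.lastCases with
        | last => simp
        | cast j' => simpa using ha1 i' j'
    · intro i
      cases i using Fin.lastCases with
      | last => simp
      | cast i' => simpa using ha2 i'
    · intro i
      cases i using Fin.lastCases with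
      | last =>
        rw [Fin.sum_univ_castSucc]
        simp only [Fin.lastCases_last, Fin.lastCases_castSucc]
        rw [hc]
        ring
      | cast i' =>
        rw [Fin.sum_univ_castSucc]
        simp only [Fin.lastCases_last, Fin.lastCases_castSucc]
        linear_combination ha3 i'

private lemma frobenius_sum {N : ℕ} (p : ℕ) (hp : p.Prime) (e : ℕ) {n : ℕ}
    (y : Fin n → MvPolynomial (Fin N) ℤ) :
    ∃ c : MvPolynomial (Fin N) ℤ,
      (∑ j, y j) ^ p ^ e = ∑ j, y j ^ p ^ e + (p : MvPolynomial (Fin N) ℤ) * c := by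
  haveI := Fact.mk hp
  set z := (∑ j, y j) ^ p ^ e - ∑ j, y j ^ p ^ e with hz
  have hmap : MvPolynomial.map (Int.castRingHom (ZMod p)) z = 0 := by
    simp only [hz, map_sub, map_pow, map_sum]
    rw [sum_pow_char_pow, sub_self]
  have hdvd : MvPolynomial.C (p : ℤ) ∣ z := by
    rw [MvPolynomial.C_dvd_iff_dvd_coeff]
    intro i
    have h := congrArg (MvPolynomial.coeff i) hmap
    rw [MvPolynomial.coeff_map] at h
    simpa [ZMod.intCast_zmod_eq_zero_iff_dvd] using h
  obtain ⟨c, hcz⟩ := hdvd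
  refine ⟨c, ?_⟩
  have : MvPolynomial.C ((p : ℕ) : ℤ) = ((p : ℕ) : MvPolynomial (Fin N) ℤ) :=
    map_natCast (MvPolynomial.C : ℤ →+* MvPolynomial (Fin N) ℤ) p
  rw [← this]
  linear_combination hcz

private lemma pair_sum {R : Type*} [CommRing R] {n : ℕ} (s : Fin n → Fin n → R)
    (hdiag : ∀ i, s i i = 0) :
    ∑ i, ∑ j, s i j =
      ∑ x ∈ (Finset.univ ×ˢ Finset.univ).filter (fun x : Fin n × Fin n => x.1 < x.2),
        (s x.1 x.2 + s x.2 x.1) := by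
  rw [← Finset.sum_product']
  rw [Finset.sum_add_distrib]
  have h2 : ∑ x ∈ (Finset.univ ×ˢ Finset.univ).filter
        (fun x : Fin n × Fin n => x.1 < x.2), s x.2 x.1
      = ∑ x ∈ (Finset.univ ×ˢ Finset.univ).filter
        (fun x : Fin n × Fin n => x.2 < x.1), s x.1 x.2 := by
    apply Finset.sum_nbij' (fun x => Prod.swap x) (fun x => Prod.swap x) <;>
      simp [Finset.mem_filter]
  rw [h2]
  rw [← Finset.sum_filter_add_sum_filter_not (Finset.univ ×ˢ Finset.univ)
    (fun x : Fin n × Fin n => x.1 < x.2) (fun x => s x.1 x.2)]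
  congr 1
  symm
  apply Finset.sum_subset
  · intro x hx
    simp only [Finset.mem_filter] at hx ⊢
    exact ⟨hx.1, not_lt.mpr hx.2.le⟩
  · intro x hx hnx
    simp only [Finset.mem_filter, not_and, not_lt] at hx hnx
    have : x.1 = x.2 := le_antisymm (hnx hx.1) hx.2
    rw [this, hdiag]

theorem stmt6 (N n : ℕ) (f g : Fin n → MvPolynomial (Fin N) ℤ)
    (hreg : RingTheory.Sequence.IsRegular (MvPolynomial (Fin N) ℤ) (List.ofFn g))
    (hsum : ∑ i, f i * g i = 0)
    (p : ℕ) (hp : p.Prime) (e : ℕ) (he : 1 ≤ e) (q : ℕ) (hq : q = p ^ e)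
    (lam : MvPolynomial (Fin N) ℤ)
    (hlam : (p : MvPolynomial (Fin N) ℤ) * lam = ∑ i, (f i * g i) ^ q) :
    ∃ k : ℕ, lam * (∏ i, g i) ^ k ∈
      Ideal.span (Set.range fun i => g i ^ (q + k)) := by
  subst hq
  obtain ⟨a, hanti, hdiag0, harep⟩ := koszul n g f hreg.toIsWeaklyRegular hsum
  choose c hc using fun i => frobenius_sum p hp e (fun j => a i j * g j)
  refine ⟨0, ?_⟩
  simp only [pow_zero, mul_one, Nat.add_zero]
  set I : Ideal (MvPolynomial (Fin N) ℤ) := Ideal.span (Set.range fun i => g i ^ p ^ e) with hIdef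
  set s : Fin n → Fin n → MvPolynomial (Fin N) ℤ :=
    fun i j => (a i j * g j) ^ p ^ e * g i ^ p ^ e with hs
  have hq0 : p ^ e ≠ 0 := pow_ne_zero _ hp.ne_zero
  have hsdiag : ∀ i, s i i = 0 := by
    intro i
    simp only [hs]
    simp [hdiag0 i, zero_pow hq0]
  -- the uniform factor
  obtain ⟨m, hm⟩ : ∃ m : MvPolynomial (Fin N) ℤ, (1 : MvPolynomial (Fin N) ℤ) + (-1) ^ p ^ e = (p : MvPolynomial (Fin N) ℤ) * m := by
    rcases Nat.even_or_odd (p ^ e) with hev | hod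
    · have hpe : p = 2 := hp.even_iff.mp ((Nat.even_pow.mp hev).1)
      refine ⟨1, ?_⟩
      rw [hev.neg_one_pow, hpe]
      norm_num
    · exact ⟨0, by rw [hod.neg_one_pow]; ring⟩
  -- key expansion
  have key : (p : MvPolynomial (Fin N) ℤ) * lam
      = (∑ i, ∑ j, s i j) + (p : MvPolynomial (Fin N) ℤ) * ∑ i, c i * g i ^ p ^ e := by
    rw [hlam]
    have hterm : ∀ i : Fin n, (f i * g i) ^ p ^ e
        = (∑ j, s i j) + (p : MvPolynomial (Fin N) ℤ) * (c i * g i ^ p ^ e) := by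
      intro i
      rw [mul_pow, harep i, hc i, add_mul, Finset.sum_mul]
      simp only [hs]
      ring
    rw [Finset.sum_congr rfl fun i _ => hterm i, Finset.sum_add_distrib,
      ← Finset.mul_sum]
  rw [pair_sum s hsdiag] at key
  have hpair : ∀ x : Fin n × Fin n, s x.1 x.2 + s x.2 x.1
      = (p : MvPolynomial (Fin N) ℤ) * (m * s x.1 x.2) := by
    intro x
    have h1 : s x.2 x.1 = (-1 : MvPolynomial (Fin N) ℤ) ^ p ^ e * s x.1 x.2 := by
      simp only [hs]
      rw [hanti x.1 x.2, neg_mul, neg_pow]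
      ring
    rw [h1]
    linear_combination s x.1 x.2 * hm
  rw [Finset.sum_congr rfl fun x _ => hpair x, ← Finset.mul_sum, ← mul_add] at key
  have hp0 : (p : MvPolynomial (Fin N) ℤ) ≠ 0 := Nat.cast_ne_zero.mpr hp.ne_zero
  have hlameq : lam = (∑ x ∈ (Finset.univ ×ˢ Finset.univ).filter
      (fun x : Fin n × Fin n => x.1 < x.2), m * s x.1 x.2)
        + ∑ i, c i * g i ^ p ^ e := mul_left_cancel₀ hp0 key
  rw [hlameq]
  apply add_mem
  · apply Ideal.sum_mem
    intro x _
    have : g x.1 ^ p ^ e ∈ I := Ideal.subset_span ⟨x.1, rfl⟩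
    have h2 : m * s x.1 x.2 = (m * (a x.1 x.2 * g x.2) ^ p ^ e) * g x.1 ^ p ^ e := by
      simp only [hs]; ring
    rw [h2]
    exact Ideal.mul_mem_left _ _ this
  · exact Ideal.sum_mem _ fun i _ =>
      Ideal.mul_mem_left _ _ (Ideal.subset_span ⟨i, rfl⟩)
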